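/- arXiv:0912.4900 — 9 statements merged into one kernel-verified Lean document; each statement's English description precedes it below -/
import Mathlib

section
/- The function μ(t) = (λ·cos(ωt)·sinh(λt) + ω·sin(ωt)·cosh(λt)) / ((ω² + λ²)·cosh(λt)) satisfies μ'' + (ω² + 2λ²/cosh²(λt))·μ = 0 for all real t. -/
open Real

theorem stmt_4 (lam om : ℝ) (h : om ^ 2 + lam ^ 2 ≠ 0)
    (μ : ℝ → ℝ)
    (hμ : ∀ t, μ t =
      (lam * Real.cos (om * t) * Real.sinh (lam * t) + om * Real.sin (om * t) * Real.cosh (lam * t)) /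
      ((om ^ 2 + lam ^ 2) * Real.cosh (lam * t))) :
    ∀ t : ℝ, deriv (deriv μ) t + (om ^ 2 + 2 * lam ^ 2 / Real.cosh (lam * t) ^ 2) * μ t = 0 := by
  have hc : ∀ s : ℝ, Real.cosh s ≠ 0 := fun s => (Real.cosh_pos s).ne'
  -- basic derivative facts
  have hsin : ∀ t : ℝ, HasDerivAt (fun u => Real.sin (om * u)) (om * Real.cos (om * t)) t := by
    intro t
    have := (Real.hasDerivAt_sin (om * t)).comp t ((hasDerivAt_id t).const_mul om)
    simpa [mul_comm, Function.comp_def] using this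
  have hcos : ∀ t : ℝ, HasDerivAt (fun u => Real.cos (om * u)) (-(om * Real.sin (om * t))) t := by
    intro t
    have := (Real.hasDerivAt_cos (om * t)).comp t ((hasDerivAt_id t).const_mul om)
    refine this.congr_deriv ?_; ring
  have hsinh : ∀ t : ℝ, HasDerivAt (fun u => Real.sinh (lam * u)) (lam * Real.cosh (lam * t)) t := by
    intro t
    have := (Real.hasDerivAt_sinh (lam * t)).comp t ((hasDerivAt_id t).const_mul lam)
    simpa [mul_comm, Function.comp_def] using this
  have hcosh : ∀ t : ℝ, HasDerivAt (fun u => Real.cosh (lam * u)) (lam * Real.sinh (lam * t)) t := by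
    intro t
    have := (Real.hasDerivAt_cosh (lam * t)).comp t ((hasDerivAt_id t).const_mul lam)
    simpa [mul_comm, Function.comp_def] using this
  -- tanh(lam t) derivative
  have hth : ∀ t : ℝ, HasDerivAt (fun u => Real.sinh (lam * u) / Real.cosh (lam * u))
      (lam / Real.cosh (lam * t) ^ 2) t := by
    intro t
    have := (hsinh t).div (hcosh t) (hc (lam * t))
    refine this.congr_deriv ?_
    have key : lam * Real.cosh (lam * t) * Real.cosh (lam * t)
        - Real.sinh (lam * t) * (lam * Real.sinh (lam * t)) = lam := by
      linear_combination lam * Real.cosh_sq_sub_sinh_sq (lam * t)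
    rw [key]
  -- rewrite μ
  have hμeq : μ = fun t => (lam * Real.cos (om * t) * (Real.sinh (lam * t) / Real.cosh (lam * t))
      + om * Real.sin (om * t)) / (om ^ 2 + lam ^ 2) := by
    funext t
    rw [hμ t]
    have hcne := hc (lam * t)
    rw [div_eq_div_iff (mul_ne_zero h hcne) h]
    field_simp
  -- first derivative
  set D1 : ℝ → ℝ := fun t => (om ^ 2 * Real.cos (om * t)
      - lam * om * Real.sin (om * t) * (Real.sinh (lam * t) / Real.cosh (lam * t))
      + lam ^ 2 * Real.cos (om * t) / Real.cosh (lam * t) ^ 2) / (om ^ 2 + lam ^ 2) with hD1def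
  have hD1 : ∀ t : ℝ, HasDerivAt μ (D1 t) t := by
    intro t
    rw [hμeq]
    have h1 : HasDerivAt (fun u => lam * Real.cos (om * u) * (Real.sinh (lam * u) / Real.cosh (lam * u))
        + om * Real.sin (om * u))
        ((lam * -(om * Real.sin (om * t))) * (Real.sinh (lam * t) / Real.cosh (lam * t))
          + (lam * Real.cos (om * t)) * (lam / Real.cosh (lam * t) ^ 2)
          + om * (om * Real.cos (om * t))) t :=
      ((((hcos t).const_mul lam).mul (hth t)).add ((hsin t).const_mul om))
    have := h1.div_const (om ^ 2 + lam ^ 2)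
    refine this.congr_deriv ?_
    rw [hD1def]
    ring
  have hDμ : deriv μ = D1 := funext fun t => (hD1 t).deriv
  -- second derivative
  have hD2 : ∀ t : ℝ, HasDerivAt D1
      ((-(om ^ 3) * Real.sin (om * t)
        - lam * om ^ 2 * Real.cos (om * t) * (Real.sinh (lam * t) / Real.cosh (lam * t))
        - 2 * lam ^ 2 * om * Real.sin (om * t) / Real.cosh (lam * t) ^ 2
        - 2 * lam ^ 3 * Real.cos (om * t) * Real.sinh (lam * t) / Real.cosh (lam * t) ^ 3)
        / (om ^ 2 + lam ^ 2)) t := by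
    intro t
    have hch2 : HasDerivAt (fun u => Real.cosh (lam * u) ^ 2)
        (2 * Real.cosh (lam * t) * (lam * Real.sinh (lam * t))) t := by
      have := (hcosh t).pow 2
      refine this.congr_deriv ?_; ring
    have h3 : HasDerivAt (fun u => lam ^ 2 * Real.cos (om * u) / Real.cosh (lam * u) ^ 2)
        (((-(om * Real.sin (om * t))) * lam ^ 2 * Real.cosh (lam * t) ^ 2
          - lam ^ 2 * Real.cos (om * t) * (2 * Real.cosh (lam * t) * (lam * Real.sinh (lam * t))))
          / (Real.cosh (lam * t) ^ 2) ^ 2) t := by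
      have := (((hcos t).const_mul (lam ^ 2)).div hch2 (pow_ne_zero 2 (hc (lam * t))))
      refine this.congr_deriv ?_; ring
    have h1 : HasDerivAt (fun u => om ^ 2 * Real.cos (om * u)) (om ^ 2 * -(om * Real.sin (om * t))) t :=
      (hcos t).const_mul (om ^ 2)
    have h2 : HasDerivAt (fun u => lam * om * Real.sin (om * u) * (Real.sinh (lam * u) / Real.cosh (lam * u)))
        ((lam * om * (om * Real.cos (om * t))) * (Real.sinh (lam * t) / Real.cosh (lam * t))
          + (lam * om * Real.sin (om * t)) * (lam / Real.cosh (lam * t) ^ 2)) t :=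
      ((hsin t).const_mul (lam * om)).mul (hth t)
    have := ((h1.sub h2).add h3).div_const (om ^ 2 + lam ^ 2)
    rw [hD1def]
    refine this.congr_deriv ?_
    have hcne := hc (lam * t)
    field_simp
    ring
  intro t
  rw [hDμ, (hD2 t).deriv, hμ t]
  have hcne := hc (lam * t)
  field_simp
  ring
end

section
/- The functions u(t) = (ω·cos(ωt)·cosh(λt) − λ·sin(ωt)·sinh(λt))/cosh(λt) and v(t) = (ω·sin(ωt)·cosh(λt) + λ·cos(ωt)·sinh(λt))/cosh(λt) both satisfy y'' + (ω² + 2λ²/cosh²(λt))·y = 0, and their Wronskian u·v' − u'·v is identically equal to the constant ω·(ω² + λ²). -/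
open Real

private lemma cosD (om t : ℝ) : HasDerivAt (fun s => Real.cos (om*s)) (-(om * Real.sin (om*t))) t := by
  simpa [mul_comm, Function.comp_def] using (Real.hasDerivAt_cos (om*t)).comp t ((hasDerivAt_id t).const_mul om)

private lemma sinD (om t : ℝ) : HasDerivAt (fun s => Real.sin (om*s)) (om * Real.cos (om*t)) t := by
  simpa [mul_comm, Function.comp_def] using (Real.hasDerivAt_sin (om*t)).comp t ((hasDerivAt_id t).const_mul om)

private lemma coshD (lam t : ℝ) : HasDerivAt (fun s => Real.cosh (lam*s)) (lam * Real.sinh (lam*t)) t := by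
  simpa [mul_comm, Function.comp_def] using (Real.hasDerivAt_cosh (lam*t)).comp t ((hasDerivAt_id t).const_mul lam)

private lemma sinhD (lam t : ℝ) : HasDerivAt (fun s => Real.sinh (lam*s)) (lam * Real.cosh (lam*t)) t := by
  simpa [mul_comm, Function.comp_def] using (Real.hasDerivAt_sinh (lam*t)).comp t ((hasDerivAt_id t).const_mul lam)

private lemma dU0 (lam om t : ℝ) : HasDerivAt
    (fun t => (om * Real.cos (om*t) * Real.cosh (lam*t) - lam * Real.sin (om*t) * Real.sinh (lam*t)) / Real.cosh (lam*t))
    ((-om^2*Real.sin (om*t)*Real.cosh (lam*t)^2 - lam*om*Real.cos (om*t)*Real.sinh (lam*t)*Real.cosh (lam*t) - lam^2*Real.sin (om*t)) / Real.cosh (lam*t)^2) t := by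
  have hC : Real.cosh (lam*t) ≠ 0 := (Real.cosh_pos (lam*t)).ne'
  have h := ((((cosD om t).const_mul om).mul (coshD lam t)).sub
      (((sinD om t).const_mul lam).mul (sinhD lam t))).div (coshD lam t) hC
  refine h.congr_deriv (Eq.symm ?_)
  have hs := Real.sinh_sq (lam*t)
  simp only [Pi.mul_apply, Pi.sub_apply, Pi.add_apply, Pi.pow_apply]
  generalize Real.cosh (lam*t) = C at *
  generalize Real.sinh (lam*t) = S at *
  field_simp
  linear_combination (-(Real.sin (om*t)) * lam^2) * hs

private lemma dV0 (lam om t : ℝ) : HasDerivAt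
    (fun t => (om * Real.sin (om*t) * Real.cosh (lam*t) + lam * Real.cos (om*t) * Real.sinh (lam*t)) / Real.cosh (lam*t))
    ((om^2*Real.cos (om*t)*Real.cosh (lam*t)^2 - lam*om*Real.sin (om*t)*Real.sinh (lam*t)*Real.cosh (lam*t) + lam^2*Real.cos (om*t)) / Real.cosh (lam*t)^2) t := by
  have hC : Real.cosh (lam*t) ≠ 0 := (Real.cosh_pos (lam*t)).ne'
  have h := ((((sinD om t).const_mul om).mul (coshD lam t)).add
      (((cosD om t).const_mul lam).mul (sinhD lam t))).div (coshD lam t) hC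
  refine h.congr_deriv (Eq.symm ?_)
  have hs := Real.sinh_sq (lam*t)
  simp only [Pi.mul_apply, Pi.sub_apply, Pi.add_apply, Pi.pow_apply]
  generalize Real.cosh (lam*t) = C at *
  generalize Real.sinh (lam*t) = S at *
  field_simp
  linear_combination (Real.cos (om*t) * lam^2) * hs

private lemma dU1 (lam om t : ℝ) : HasDerivAt
    (fun t => (-om^2*Real.sin (om*t)*Real.cosh (lam*t)^2 - lam*om*Real.cos (om*t)*Real.sinh (lam*t)*Real.cosh (lam*t) - lam^2*Real.sin (om*t)) / Real.cosh (lam*t)^2)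
    ((-om^3*Real.cos (om*t)*Real.cosh (lam*t)^3 + lam*om^2*Real.sin (om*t)*Real.sinh (lam*t)*Real.cosh (lam*t)^2 - 2*lam^2*om*Real.cos (om*t)*Real.cosh (lam*t) + 2*lam^3*Real.sin (om*t)*Real.sinh (lam*t)) / Real.cosh (lam*t)^3) t := by
  have hC : Real.cosh (lam*t) ≠ 0 := (Real.cosh_pos (lam*t)).ne'
  have hC2 : Real.cosh (lam*t)^2 ≠ 0 := pow_ne_zero _ hC
  have h := ((((((sinD om t).const_mul (-om^2)).mul ((coshD lam t).pow 2)).sub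
      ((((cosD om t).const_mul (lam*om)).mul (sinhD lam t)).mul (coshD lam t))).sub
      ((sinD om t).const_mul (lam^2))).div ((coshD lam t).pow 2) hC2)
  refine h.congr_deriv (Eq.symm ?_)
  have hs := Real.sinh_sq (lam*t)
  simp only [Pi.mul_apply, Pi.sub_apply, Pi.add_apply, Pi.pow_apply]
  generalize Real.cosh (lam*t) = C at *
  generalize Real.sinh (lam*t) = S at *
  field_simp
  linear_combination (-(om*Real.cos (om*t))*lam^2*C^2) * hs

private lemma dV1 (lam om t : ℝ) : HasDerivAt
    (fun t => (om^2*Real.cos (om*t)*Real.cosh (lam*t)^2 - lam*om*Real.sin (om*t)*Real.sinh (lam*t)*Real.cosh (lam*t) + lam^2*Real.cos (om*t)) / Real.cosh (lam*t)^2)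
    ((-om^3*Real.sin (om*t)*Real.cosh (lam*t)^3 - lam*om^2*Real.cos (om*t)*Real.sinh (lam*t)*Real.cosh (lam*t)^2 - 2*lam^2*om*Real.sin (om*t)*Real.cosh (lam*t) - 2*lam^3*Real.cos (om*t)*Real.sinh (lam*t)) / Real.cosh (lam*t)^3) t := by
  have hC : Real.cosh (lam*t) ≠ 0 := (Real.cosh_pos (lam*t)).ne'
  have hC2 : Real.cosh (lam*t)^2 ≠ 0 := pow_ne_zero _ hC
  have h := ((((((cosD om t).const_mul (om^2)).mul ((coshD lam t).pow 2)).sub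
      ((((sinD om t).const_mul (lam*om)).mul (sinhD lam t)).mul (coshD lam t))).add
      ((cosD om t).const_mul (lam^2))).div ((coshD lam t).pow 2) hC2)
  refine h.congr_deriv (Eq.symm ?_)
  have hs := Real.sinh_sq (lam*t)
  simp only [Pi.mul_apply, Pi.sub_apply, Pi.add_apply, Pi.pow_apply]
  generalize Real.cosh (lam*t) = C at *
  generalize Real.sinh (lam*t) = S at *
  field_simp
  linear_combination (-(om*Real.sin (om*t))*lam^2*C^2) * hs

theorem stmt_5 (lam om : ℝ)
    (u v : ℝ → ℝ)
    (hu : ∀ t, u t =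
      (om * Real.cos (om * t) * Real.cosh (lam * t) - lam * Real.sin (om * t) * Real.sinh (lam * t)) /
        Real.cosh (lam * t))
    (hv : ∀ t, v t =
      (om * Real.sin (om * t) * Real.cosh (lam * t) + lam * Real.cos (om * t) * Real.sinh (lam * t)) /
        Real.cosh (lam * t)) :
    (∀ t : ℝ, deriv (deriv u) t + (om ^ 2 + 2 * lam ^ 2 / Real.cosh (lam * t) ^ 2) * u t = 0) ∧
    (∀ t : ℝ, deriv (deriv v) t + (om ^ 2 + 2 * lam ^ 2 / Real.cosh (lam * t) ^ 2) * v t = 0) ∧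
    (∀ t : ℝ, u t * deriv v t - deriv u t * v t = om * (om ^ 2 + lam ^ 2)) := by
  have hufun : u = fun t => (om * Real.cos (om*t) * Real.cosh (lam*t) - lam * Real.sin (om*t) * Real.sinh (lam*t)) / Real.cosh (lam*t) := funext hu
  have hvfun : v = fun t => (om * Real.sin (om*t) * Real.cosh (lam*t) + lam * Real.cos (om*t) * Real.sinh (lam*t)) / Real.cosh (lam*t) := funext hv
  have hdu : deriv u = fun t => (-om^2*Real.sin (om*t)*Real.cosh (lam*t)^2 - lam*om*Real.cos (om*t)*Real.sinh (lam*t)*Real.cosh (lam*t) - lam^2*Real.sin (om*t)) / Real.cosh (lam*t)^2 := by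
    funext t; rw [hufun]; exact (dU0 lam om t).deriv
  have hdv : deriv v = fun t => (om^2*Real.cos (om*t)*Real.cosh (lam*t)^2 - lam*om*Real.sin (om*t)*Real.sinh (lam*t)*Real.cosh (lam*t) + lam^2*Real.cos (om*t)) / Real.cosh (lam*t)^2 := by
    funext t; rw [hvfun]; exact (dV0 lam om t).deriv
  have hddu : ∀ t, deriv (deriv u) t = (-om^3*Real.cos (om*t)*Real.cosh (lam*t)^3 + lam*om^2*Real.sin (om*t)*Real.sinh (lam*t)*Real.cosh (lam*t)^2 - 2*lam^2*om*Real.cos (om*t)*Real.cosh (lam*t) + 2*lam^3*Real.sin (om*t)*Real.sinh (lam*t)) / Real.cosh (lam*t)^3 := by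
    intro t; rw [hdu]; exact (dU1 lam om t).deriv
  have hddv : ∀ t, deriv (deriv v) t = (-om^3*Real.sin (om*t)*Real.cosh (lam*t)^3 - lam*om^2*Real.cos (om*t)*Real.sinh (lam*t)*Real.cosh (lam*t)^2 - 2*lam^2*om*Real.sin (om*t)*Real.cosh (lam*t) - 2*lam^3*Real.cos (om*t)*Real.sinh (lam*t)) / Real.cosh (lam*t)^3 := by
    intro t; rw [hdv]; exact (dV1 lam om t).deriv
  refine ⟨fun t => ?_, fun t => ?_, fun t => ?_⟩
  · have hC : Real.cosh (lam*t) ≠ 0 := (Real.cosh_pos (lam*t)).ne'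
    rw [hddu t, hu t]
    field_simp
    ring
  · have hC : Real.cosh (lam*t) ≠ 0 := (Real.cosh_pos (lam*t)).ne'
    rw [hddv t, hv t]
    field_simp
    ring
  · have hC : Real.cosh (lam*t) ≠ 0 := (Real.cosh_pos (lam*t)).ne'
    have hs := Real.sinh_sq (lam*t)
    have hsc := Real.sin_sq_add_cos_sq (om*t)
    rw [hu t, hv t, hdu, hdv]
    beta_reduce
    generalize Real.cosh (lam*t) = C at *
    generalize Real.sinh (lam*t) = S at *
    field_simp
    linear_combination (om*lam^2*C) * hs + (om^3*C^3 + om*lam^2*C + om*lam^2*C*S^2) * hsc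
end

section
/- The function κ(t) = (ω² + λ²·tanh²(λt))^{1/2} satisfies the Ermakov equation κ'' + (ω² + 2λ²/cosh²(λt))·κ = ω²(λ²+ω²)² / κ³ for all real t. -/
open Real

theorem stmt_6 (lam om : ℝ) (hom : om ≠ 0)
    (κ : ℝ → ℝ)
    (hκ : ∀ t, κ t = Real.sqrt (om ^ 2 + lam ^ 2 * Real.tanh (lam * t) ^ 2)) :
    ∀ t : ℝ, deriv (deriv κ) t + (om ^ 2 + 2 * lam ^ 2 / Real.cosh (lam * t) ^ 2) * κ t =
      om ^ 2 * (lam ^ 2 + om ^ 2) ^ 2 / κ t ^ 3 := by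
  have hκf : κ = fun t => Real.sqrt (om^2 + lam^2 * (Real.sinh (lam*t)/Real.cosh (lam*t))^2) :=
    funext fun t => by rw [hκ t, Real.tanh_eq_sinh_div_cosh]
  subst hκf
  intro t
  -- basic facts (for arbitrary u)
  have hc : ∀ u : ℝ, Real.cosh (lam*u) ≠ 0 := fun u => (Real.cosh_pos (lam*u)).ne'
  have hFpos : ∀ u : ℝ, 0 < om^2 + lam^2 * (Real.sinh (lam*u)/Real.cosh (lam*u))^2 := fun u => by
    positivity
  have hlt : ∀ u : ℝ, HasDerivAt (fun x : ℝ => lam * x) lam u := fun u => by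
    simpa using (hasDerivAt_id u).const_mul lam
  have hs : ∀ u : ℝ, HasDerivAt (fun x => Real.sinh (lam*x)) (Real.cosh (lam*u) * lam) u :=
    fun u => (Real.hasDerivAt_sinh (lam*u)).comp u (hlt u)
  have hcc : ∀ u : ℝ, HasDerivAt (fun x => Real.cosh (lam*x)) (Real.sinh (lam*u) * lam) u :=
    fun u => (Real.hasDerivAt_cosh (lam*u)).comp u (hlt u)
  have hF : ∀ u : ℝ, HasDerivAt (fun x => om^2 + lam^2 * (Real.sinh (lam*x)/Real.cosh (lam*x))^2)
      (lam^2 * (2 * (Real.sinh (lam*u) / Real.cosh (lam*u)) ^ 1 *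
        ((Real.cosh (lam*u) * lam * Real.cosh (lam*u) - Real.sinh (lam*u) * (Real.sinh (lam*u) * lam)) /
          Real.cosh (lam*u) ^ 2))) u := fun u => by
    have := ((((hs u).div (hcc u) (hc u)).pow 2).const_mul (lam^2)).const_add (om^2)
    simpa using this
  have hSpos : ∀ u : ℝ, 0 < Real.sqrt (om^2 + lam^2 * (Real.sinh (lam*u)/Real.cosh (lam*u))^2) :=
    fun u => Real.sqrt_pos.mpr (hFpos u)
  -- first derivative, clean form
  have hd1 : ∀ u : ℝ, HasDerivAt (fun t => Real.sqrt (om^2 + lam^2 * (Real.sinh (lam*t)/Real.cosh (lam*t))^2))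
      (lam^3 * Real.sinh (lam*u) / (Real.cosh (lam*u)^3 *
        Real.sqrt (om^2 + lam^2 * (Real.sinh (lam*u)/Real.cosh (lam*u))^2))) u := fun u => by
    have h := (hF u).sqrt (hFpos u).ne'
    convert h using 1
    have h1 := Real.cosh_sq_sub_sinh_sq (lam*u)
    have hS := (hSpos u).ne'
    field_simp
    linear_combination (-(lam^3*Real.sinh (lam*u))) * h1
  have hderiv1 : deriv (fun t => Real.sqrt (om^2 + lam^2 * (Real.sinh (lam*t)/Real.cosh (lam*t))^2))
      = fun u => lam^3 * Real.sinh (lam*u) / (Real.cosh (lam*u)^3 *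
        Real.sqrt (om^2 + lam^2 * (Real.sinh (lam*u)/Real.cosh (lam*u))^2)) :=
    funext fun u => (hd1 u).deriv
  rw [hderiv1]
  -- second derivative
  have hN : HasDerivAt (fun x => lam^3 * Real.sinh (lam*x)) (lam^3 * (Real.cosh (lam*t) * lam)) t :=
    (hs t).const_mul (lam^3)
  have hD : HasDerivAt (fun x => Real.cosh (lam*x)^3 *
      Real.sqrt (om^2 + lam^2 * (Real.sinh (lam*x)/Real.cosh (lam*x))^2))
      ((3 * Real.cosh (lam*t)^2 * (Real.sinh (lam*t) * lam)) *
        Real.sqrt (om^2 + lam^2 * (Real.sinh (lam*t)/Real.cosh (lam*t))^2) +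
       Real.cosh (lam*t)^3 *
        ((lam^2 * (2 * (Real.sinh (lam*t) / Real.cosh (lam*t)) ^ 1 *
        ((Real.cosh (lam*t) * lam * Real.cosh (lam*t) - Real.sinh (lam*t) * (Real.sinh (lam*t) * lam)) /
          Real.cosh (lam*t) ^ 2))) / (2 * Real.sqrt (om^2 + lam^2 * (Real.sinh (lam*t)/Real.cosh (lam*t))^2)))) t := by
    have := (((hcc t).pow 3)).mul ((hF t).sqrt (hFpos t).ne')
    refine this.congr_deriv ?_
    norm_num
  have hDne : Real.cosh (lam*t)^3 *
      Real.sqrt (om^2 + lam^2 * (Real.sinh (lam*t)/Real.cosh (lam*t))^2) ≠ 0 :=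
    mul_ne_zero (pow_ne_zero 3 (hc t)) (hSpos t).ne'
  have hd2 := hN.div hD hDne
  rw [show deriv (fun u => lam^3 * Real.sinh (lam*u) / (Real.cosh (lam*u)^3 *
      Real.sqrt (om^2 + lam^2 * (Real.sinh (lam*u)/Real.cosh (lam*u))^2))) t = _ from hd2.deriv]
  -- final algebra
  have hS2 : Real.sqrt (om^2 + lam^2 * (Real.sinh (lam*t)/Real.cosh (lam*t))^2) ^ 2
      = om^2 + lam^2 * (Real.sinh (lam*t)/Real.cosh (lam*t))^2 := Real.sq_sqrt (hFpos t).le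
  have h1 := Real.cosh_sq_sub_sinh_sq (lam*t)
  have hSne := (hSpos t).ne'
  have hcne := hc t
  beta_reduce
  generalize hSd : Real.sqrt (om^2 + lam^2 * (Real.sinh (lam*t)/Real.cosh (lam*t))^2) = S at hS2 hSne ⊢
  generalize Real.sinh (lam*t) = x at *
  generalize Real.cosh (lam*t) = y at *
  have hG : y^2*S^2 = om^2*y^2 + lam^2*(y^2-1) := by
    rw [hS2]; field_simp; linear_combination (-lam^2) * h1
  have hx2 : x^2 = y^2 - 1 := by linear_combination -h1
  field_simp
  rw [hx2]
  linear_combination (lam^4*(y^2 - 3*(y^2-1)) + (y^2*S^2 + om^2*y^2 + lam^2*(y^2-1))*(om^2*y^2+2*lam^2)) * hG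
end

section
/- Let ω: ℝ → ℝ be continuous and let u, v be two solutions of y'' + ω(t)²·y = 0 on ℝ with constant Wronskian W = u·v' − u'·v ≠ 0. Let A, B, C be real constants with A·C − B² = c₀/W², and suppose A·u(t)² + 2B·u(t)·v(t) + C·v(t)² > 0 for all t. Then κ(t) = (A·u(t)² + 2B·u(t)·v(t) + C·v(t)²)^{1/2} satisfies the Ermakov equation κ'' + ω(t)²·κ = c₀/κ³. -/
open Real

theorem stmt_7 (ω : ℝ → ℝ) (hω : Continuous ω)
    (u v : ℝ → ℝ) (hu2 : ContDiff ℝ 2 u) (hv2 : ContDiff ℝ 2 v)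
    (hu : ∀ t, deriv (deriv u) t + ω t ^ 2 * u t = 0)
    (hv : ∀ t, deriv (deriv v) t + ω t ^ 2 * v t = 0)
    (W : ℝ) (hW0 : W ≠ 0)
    (hW : ∀ t, u t * deriv v t - deriv u t * v t = W)
    (A B C c₀ : ℝ) (hABC : A * C - B ^ 2 = c₀ / W ^ 2)
    (hpos : ∀ t, A * u t ^ 2 + 2 * B * u t * v t + C * v t ^ 2 > 0)
    (κ : ℝ → ℝ)
    (hκ : ∀ t, κ t = Real.sqrt (A * u t ^ 2 + 2 * B * u t * v t + C * v t ^ 2)) :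
    ∀ t : ℝ, deriv (deriv κ) t + ω t ^ 2 * κ t = c₀ / κ t ^ 3 := by
  have hκf : κ = fun t => Real.sqrt (A * u t ^ 2 + 2 * B * u t * v t + C * v t ^ 2) :=
    funext hκ
  subst hκf
  -- differentiability facts
  have hud : Differentiable ℝ u := hu2.differentiable (by norm_num)
  have hvd : Differentiable ℝ v := hv2.differentiable (by norm_num)
  have hu1 : ContDiff ℝ 1 (deriv u) :=
    (contDiff_succ_iff_deriv.mp (show ContDiff ℝ ((1:ℕ∞)+1) u by norm_num; exact hu2)).2.2
  have hv1 : ContDiff ℝ 1 (deriv v) :=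
    (contDiff_succ_iff_deriv.mp (show ContDiff ℝ ((1:ℕ∞)+1) v by norm_num; exact hv2)).2.2
  have hu'd : Differentiable ℝ (deriv u) := hu1.differentiable (by norm_num)
  have hv'd : Differentiable ℝ (deriv v) := hv1.differentiable (by norm_num)
  -- abbreviations
  set u' := deriv u with hu'def
  set v' := deriv v with hv'def
  set u'' := deriv u' with hu''def
  set v'' := deriv v' with hv''def
  -- Q and its derivatives
  have hQ : ∀ t, HasDerivAt (fun t => A * u t ^ 2 + 2 * B * u t * v t + C * v t ^ 2)
      (2*A*u t*u' t + 2*B*(u' t*v t + u t*v' t) + 2*C*v t*v' t) t := by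
    intro t
    have Hu := (hud t).hasDerivAt
    have Hv := (hvd t).hasDerivAt
    have H := ((((Hu.pow 2).const_mul A).add (((Hu.const_mul (2*B)).mul Hv)))).add
      ((Hv.pow 2).const_mul C)
    exact H.congr_deriv (by ring)
  have hQ' : ∀ t, HasDerivAt (fun t => 2*A*u t*u' t + 2*B*(u' t*v t + u t*v' t) + 2*C*v t*v' t)
      (2*A*(u' t^2 + u t*u'' t) + 2*B*(u'' t*v t + 2*u' t*v' t + u t*v'' t)
        + 2*C*(v' t^2 + v t*v'' t)) t := by
    intro t
    have Hu := (hud t).hasDerivAt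
    have Hv := (hvd t).hasDerivAt
    have Hu' := (hu'd t).hasDerivAt
    have Hv' := (hv'd t).hasDerivAt
    have H := (((Hu.const_mul (2*A)).mul Hu').add
        (((Hu'.mul Hv).add (Hu.mul Hv')).const_mul (2*B))).add
      ((Hv.const_mul (2*C)).mul Hv')
    exact H.congr_deriv (by ring)
  have hκ1 : ∀ t, HasDerivAt (fun t => Real.sqrt (A * u t ^ 2 + 2 * B * u t * v t + C * v t ^ 2))
      ((2*A*u t*u' t + 2*B*(u' t*v t + u t*v' t) + 2*C*v t*v' t)
        / (2 * Real.sqrt (A * u t ^ 2 + 2 * B * u t * v t + C * v t ^ 2))) t := by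
    intro t
    exact (hQ t).sqrt (ne_of_gt (hpos t))
  have hDκ : deriv (fun t => Real.sqrt (A * u t ^ 2 + 2 * B * u t * v t + C * v t ^ 2))
      = fun t => (2*A*u t*u' t + 2*B*(u' t*v t + u t*v' t) + 2*C*v t*v' t)
        / (2 * Real.sqrt (A * u t ^ 2 + 2 * B * u t * v t + C * v t ^ 2)) := by
    funext t
    exact (hκ1 t).deriv
  intro t
  beta_reduce
  rw [hDκ]
  -- second derivative at t
  set Q := A * u t ^ 2 + 2 * B * u t * v t + C * v t ^ 2 with hQdef
  set Q1 := 2*A*u t*u' t + 2*B*(u' t*v t + u t*v' t) + 2*C*v t*v' t with hQ1def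
  set Q2 := 2*A*(u' t^2 + u t*u'' t) + 2*B*(u'' t*v t + 2*u' t*v' t + u t*v'' t)
        + 2*C*(v' t^2 + v t*v'' t) with hQ2def
  set s := Real.sqrt Q with hsdef
  have hQpos : 0 < Q := hpos t
  have hspos : 0 < s := Real.sqrt_pos.mpr hQpos
  have hs2 : s ^ 2 = Q := Real.sq_sqrt hQpos.le
  have hden : (2 : ℝ) * s ≠ 0 := by positivity
  have hd2 : HasDerivAt (fun t => (2*A*u t*u' t + 2*B*(u' t*v t + u t*v' t) + 2*C*v t*v' t)
        / (2 * Real.sqrt (A * u t ^ 2 + 2 * B * u t * v t + C * v t ^ 2)))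
      ((Q2 * (2*s) - Q1 * (2 * (Q1 / (2*s)))) / (2*s)^2) t := by
    have Hden : HasDerivAt
        (fun t => 2 * Real.sqrt (A * u t ^ 2 + 2 * B * u t * v t + C * v t ^ 2))
        (2 * (Q1 / (2*s))) t := (hκ1 t).const_mul 2
    exact (hQ' t).div Hden hden
  rw [hd2.deriv]
  -- Wronskian and algebra
  have hu'' : u'' t = -(ω t ^ 2 * u t) := by have := hu t; linarith
  have hv'' : v'' t = -(ω t ^ 2 * v t) := by have := hv t; linarith
  have hc : (A * C - B ^ 2) * W ^ 2 = c₀ := by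
    rw [hABC]; field_simp
  have key : 2 * Q * Q2 - Q1 ^ 2 + 4 * ω t ^ 2 * Q ^ 2 = 4 * c₀ := by
    rw [hQdef, hQ1def, hQ2def, hu'', hv'']
    have hWt := hW t
    linear_combination (4*(A*C-B^2)*(u t * v' t - u' t * v t + W)) * hWt + 4*hc
  have hs3 : s ^ 3 ≠ 0 := by positivity
  field_simp
  linear_combination key + (2*Q2 + 4*ω t^2*(s^2+Q))*hs2
end

section
/- Let ω: ℝ → ℝ be continuously differentiable and suppose A, B, C: ℝ → ℝ satisfy the system A' + 2C = 0, B' − 2ω(t)²·C = 0, C' + B − ω(t)²·A = 0. If A(t) = κ(t)² with κ(t) > 0 twice differentiable, then the function t ↦ κ(t)³·(κ''(t) + ω(t)²·κ(t)) is constant. -/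
open Real

theorem stmt_8 (ω : ℝ → ℝ) (hω : ContDiff ℝ 1 ω)
    (A B C : ℝ → ℝ)
    (hA : Differentiable ℝ A) (hB : Differentiable ℝ B) (hC : Differentiable ℝ C)
    (hsysA : ∀ t, deriv A t + 2 * C t = 0)
    (hsysB : ∀ t, deriv B t - 2 * ω t ^ 2 * C t = 0)
    (hsysC : ∀ t, deriv C t + B t - ω t ^ 2 * A t = 0)
    (κ : ℝ → ℝ) (hκpos : ∀ t, κ t > 0)
    (hκ1 : Differentiable ℝ κ) (hκ2 : Differentiable ℝ (deriv κ))
    (hAκ : ∀ t, A t = κ t ^ 2) :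
    ∃ c : ℝ, ∀ t : ℝ, κ t ^ 3 * (deriv (deriv κ) t + ω t ^ 2 * κ t) = c := by
  have hAeq : A = fun t => κ t ^ 2 := funext hAκ
  have dA : ∀ t, deriv A t = 2 * κ t * deriv κ t := by
    intro t
    rw [hAeq]
    have h := ((hκ1 t).hasDerivAt).fun_pow 2
    simpa using h.deriv
  -- C = -κ κ'
  have hCeq : ∀ t, C t = -(κ t * deriv κ t) := by
    intro t
    have h := hsysA t
    rw [dA t] at h
    linarith
  have dC : ∀ t, deriv C t = -((deriv κ t) ^ 2 + κ t * deriv (deriv κ) t) := by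
    intro t
    have hCf : C = fun t => -(κ t * deriv κ t) := funext hCeq
    rw [hCf]
    have h := (((hκ1 t).hasDerivAt).fun_mul ((hκ2 t).hasDerivAt)).fun_neg
    have := h.deriv
    rw [this]; ring
  -- B = ω²κ² + κ'² + κκ''
  have hBeq : ∀ t, B t = ω t ^ 2 * κ t ^ 2 + (deriv κ t) ^ 2 + κ t * deriv (deriv κ) t := by
    intro t
    have h := hsysC t
    rw [dC t, hAκ t] at h
    linarith
  -- F = A*B - C²
  set F : ℝ → ℝ := fun t => A t * B t - C t ^ 2 with hF
  have hFdiff : Differentiable ℝ F := (hA.mul hB).sub (hC.pow 2)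
  have hF' : ∀ t, deriv F t = 0 := by
    intro t
    have h : HasDerivAt F (deriv A t * B t + A t * deriv B t - 2 * C t ^ 1 * deriv C t) t :=
      (((hA t).hasDerivAt.mul (hB t).hasDerivAt)).sub ((hC t).hasDerivAt.pow 2)
    rw [h.deriv]
    have h1 := hsysA t
    have h2 := hsysB t
    have h3 := hsysC t
    linear_combination B t * h1 + A t * h2 - 2 * C t * h3
  have hconst : ∀ t, F t = F 0 := by
    intro t
    exact is_const_of_deriv_eq_zero hFdiff hF' t 0
  refine ⟨F 0, fun t => ?_⟩
  rw [← hconst t, hF]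
  simp only
  rw [hAκ t, hBeq t, hCeq t]
  ring
end

section
/- Every solution of the differential equation x'' + 2λ·tanh(λt)·x' + ω₀²·x = 0 on ℝ has the form x(t) = A·sin(ωt + δ)/cosh(λt) for some real constants A and δ, where ω = √(ω₀² − λ²) > 0. -/
open Real Set

lemma amp_phase (a b : ℝ) : ∃ A δ : ℝ, A * Real.cos δ = b ∧ A * Real.sin δ = a := by
  by_cases h : (b : ℂ) + a * Complex.I = 0
  · have hb : b = 0 := by
      have := congrArg Complex.re h; simpa using this
    have ha : a = 0 := by
      have := congrArg Complex.im h; simpa using this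
    exact ⟨0, 0, by simp [ha, hb]⟩
  · set z : ℂ := (b : ℂ) + a * Complex.I with hz
    have hre : z.re = b := by simp [hz]
    have him : z.im = a := by simp [hz]
    have habs : ‖z‖ ≠ 0 := by simpa using h
    refine ⟨‖z‖, z.arg, ?_, ?_⟩
    · rw [Complex.cos_arg h, hre]; field_simp
    · rw [Complex.sin_arg, him]; field_simp

lemma harmonicODE (c : ℝ) (hc : c ≠ 0) (y y' : ℝ → ℝ)
    (hy1 : ∀ t, HasDerivAt y (y' t) t)
    (hy2 : ∀ t, HasDerivAt y' (-(c ^ 2) * y t) t) :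
    ∀ t, y t = y 0 * Real.cos (c * t) + (y' 0 / c) * Real.sin (c * t) := by
  set v : ℝ → ℝ × ℝ → ℝ × ℝ := fun _ p => (p.2, -(c ^ 2) * p.1) with hv
  have hK : ∀ t, LipschitzWith (Real.toNNReal (max 1 (c ^ 2))) (v t) := by
    intro t
    apply LipschitzWith.of_dist_le_mul
    intro p q
    have hd1 : dist p.1 q.1 ≤ dist p q := by rw [Prod.dist_eq]; exact le_max_left _ _
    have hd2 : dist p.2 q.2 ≤ dist p q := by rw [Prod.dist_eq]; exact le_max_right _ _
    have h2 : dist (v t p).2 (v t q).2 = c ^ 2 * dist p.1 q.1 := by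
      show dist (-(c ^ 2) * p.1) (-(c ^ 2) * q.1) = _
      rw [Real.dist_eq, Real.dist_eq,
        show -(c ^ 2) * p.1 - -(c ^ 2) * q.1 = c ^ 2 * (q.1 - p.1) from by ring, abs_mul,
        abs_of_nonneg (sq_nonneg c), abs_sub_comm]
    have hcoe : (Real.toNNReal (max 1 (c ^ 2)) : ℝ) = max 1 (c ^ 2) := by
      rw [Real.coe_toNNReal]; positivity
    rw [Prod.dist_eq, h2, hcoe]
    have h1 : dist (v t p).1 (v t q).1 = dist p.2 q.2 := rfl
    rw [h1]
    refine max_le ?_ ?_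
    · calc dist p.2 q.2 ≤ dist p q := hd2
        _ = 1 * dist p q := (one_mul _).symm
        _ ≤ max 1 (c ^ 2) * dist p q :=
          mul_le_mul_of_nonneg_right (le_max_left _ _) dist_nonneg
    · calc c ^ 2 * dist p.1 q.1 ≤ c ^ 2 * dist p q :=
          mul_le_mul_of_nonneg_left hd1 (sq_nonneg c)
        _ ≤ max 1 (c ^ 2) * dist p q :=
          mul_le_mul_of_nonneg_right (le_max_right _ _) dist_nonneg
  set z : ℝ → ℝ := fun t => y 0 * Real.cos (c * t) + (y' 0 / c) * Real.sin (c * t) with hzdef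
  set z' : ℝ → ℝ := fun t =>
    c * ((y' 0 / c) * Real.cos (c * t) - y 0 * Real.sin (c * t)) with hz'def
  have hcos : ∀ t : ℝ, HasDerivAt (fun t => Real.cos (c * t)) (-Real.sin (c * t) * c) t :=
    fun t => (Real.hasDerivAt_cos (c * t)).comp t (by simpa using (hasDerivAt_id t).const_mul c)
  have hsin : ∀ t : ℝ, HasDerivAt (fun t => Real.sin (c * t)) (Real.cos (c * t) * c) t :=
    fun t => (Real.hasDerivAt_sin (c * t)).comp t (by simpa using (hasDerivAt_id t).const_mul c)
  have hz1 : ∀ t, HasDerivAt z (z' t) t := by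
    intro t
    have := ((hcos t).const_mul (y 0)).add ((hsin t).const_mul (y' 0 / c))
    refine this.congr_deriv ?_
    symm
    show c * ((y' 0 / c) * Real.cos (c * t) - y 0 * Real.sin (c * t)) = _
    field_simp
    ring
  have hz2 : ∀ t, HasDerivAt z' (-(c ^ 2) * z t) t := by
    intro t
    have := (((hcos t).const_mul (y' 0 / c)).sub ((hsin t).const_mul (y 0))).const_mul c
    refine this.congr_deriv ?_
    symm
    show -(c ^ 2) * (y 0 * Real.cos (c * t) + (y' 0 / c) * Real.sin (c * t)) = _
    ring
  set f : ℝ → ℝ × ℝ := fun t => (y t, y' t) with hf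
  set g : ℝ → ℝ × ℝ := fun t => (z t, z' t) with hg
  intro t
  have h0 : f 0 = g 0 := by
    simp only [hf, hg, hzdef, hz'def, Prod.mk.injEq, mul_zero, Real.cos_zero, Real.sin_zero]
    constructor
    · ring
    · field_simp; ring
  have hmem : (0 : ℝ) ∈ Ioo (-(|t| + 1)) (|t| + 1) := by
    constructor
    · nlinarith [abs_nonneg t]
    · positivity
  have heqon := ODE_solution_unique_of_mem_Ioo (s := fun _ => (univ : Set (ℝ × ℝ)))
    (fun u _ => (hK u).lipschitzOnWith) hmem
    (f := f) (g := g)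
    (fun u _ => ⟨(hy1 u).prodMk (hy2 u), trivial⟩)
    (fun u _ => ⟨(hz1 u).prodMk (hz2 u), trivial⟩) h0
  have htmem : t ∈ Ioo (-(|t| + 1)) (|t| + 1) := by
    constructor
    · linarith [neg_abs_le t]
    · linarith [le_abs_self t]
  have key := heqon htmem
  have := congrArg Prod.fst key
  simpa [hf, hg] using this


open Real

theorem stmt_10 (lam om0 : ℝ) (hlam : lam ≠ 0) (hfreq : om0 ^ 2 > lam ^ 2)
    (om : ℝ) (hom : om = Real.sqrt (om0 ^ 2 - lam ^ 2))
    (x : ℝ → ℝ) (hx : ContDiff ℝ 2 x)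
    (heq : ∀ t, deriv (deriv x) t + 2 * lam * Real.tanh (lam * t) * deriv x t + om0 ^ 2 * x t = 0) :
    ∃ A δ : ℝ, ∀ t : ℝ, x t = A * Real.sin (om * t + δ) / Real.cosh (lam * t) := by
  have hompos : 0 < om := by
    rw [hom]; exact Real.sqrt_pos.mpr (by linarith)
  have homne : om ≠ 0 := ne_of_gt hompos
  have hom2 : om ^ 2 = om0 ^ 2 - lam ^ 2 := by
    rw [hom, sq, Real.mul_self_sqrt (by linarith)]
  have hx' : ContDiff ℝ (1 + 1) x := hx
  have hdx : Differentiable ℝ x := hx.differentiable (by norm_num)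
  have hddx : Differentiable ℝ (deriv x) := by
    have := (contDiff_succ_iff_deriv.mp hx').2.2
    exact this.differentiable (by norm_num)
  have hx1 : ∀ t, HasDerivAt x (deriv x t) t := fun t => (hdx t).hasDerivAt
  have hx2 : ∀ t, HasDerivAt (deriv x) (deriv (deriv x) t) t := fun t => (hddx t).hasDerivAt
  have hcosh : ∀ t : ℝ, HasDerivAt (fun t => Real.cosh (lam * t)) (lam * Real.sinh (lam * t)) t := by
    intro t
    have := (Real.hasDerivAt_cosh (lam * t)).comp t
      (by simpa using (hasDerivAt_id t).const_mul lam)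
    refine this.congr_deriv ?_; ring
  have hsinh : ∀ t : ℝ, HasDerivAt (fun t => Real.sinh (lam * t)) (lam * Real.cosh (lam * t)) t := by
    intro t
    have := (Real.hasDerivAt_sinh (lam * t)).comp t
      (by simpa using (hasDerivAt_id t).const_mul lam)
    refine this.congr_deriv ?_; ring
  set y : ℝ → ℝ := fun t => x t * Real.cosh (lam * t) with hydef
  set y' : ℝ → ℝ := fun t =>
    deriv x t * Real.cosh (lam * t) + x t * (lam * Real.sinh (lam * t)) with hy'def
  have hy1 : ∀ t, HasDerivAt y (y' t) t := fun t => (hx1 t).mul (hcosh t)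
  have hy2 : ∀ t, HasDerivAt y' (-(om ^ 2) * y t) t := by
    intro t
    have hcne : Real.cosh (lam * t) ≠ 0 := (Real.cosh_pos (lam * t)).ne'
    have e1 : deriv (deriv x) t * Real.cosh (lam * t) =
        -2 * lam * Real.sinh (lam * t) * deriv x t
          - om0 ^ 2 * x t * Real.cosh (lam * t) := by
      have h := heq t
      rw [Real.tanh_eq_sinh_div_cosh] at h
      field_simp at h
      linarith
    have := ((hx2 t).mul (hcosh t)).add ((hx1 t).mul ((hsinh t).const_mul lam))
    refine this.congr_deriv ?_
    symm
    show -(om ^ 2) * (x t * Real.cosh (lam * t)) = _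
    rw [hom2]
    linear_combination -1 * e1
  have hrep := harmonicODE om homne y y' hy1 hy2
  obtain ⟨A, δ, hA1, hA2⟩ := amp_phase (y 0) (y' 0 / om)
  refine ⟨A, δ, fun t => ?_⟩
  have hcne : Real.cosh (lam * t) ≠ 0 := (Real.cosh_pos (lam * t)).ne'
  have hxy : x t = y t / Real.cosh (lam * t) := by
    rw [hydef]; field_simp
  rw [hxy, hrep t, Real.sin_add, ← hA1, ← hA2]
  ring_nf
end

section
/- The functions y₁(t) = ω·tanh(λt+γ)·cos(ωt) − λ·(1 + tanh²(λt+γ))·sin(ωt) and y₂(t) = ω·tanh(λt+γ)·sin(ωt) + λ·(1 + tanh²(λt+γ))·cos(ωt) satisfy the homogeneous equation y'' − (4λ/sinh(2λt+2γ))·y' + (ω² + 2λ²/cosh²(λt+γ))·y = 0 at every t with sinh(2λt+2γ) ≠ 0, and their Wronskian equals ω·(ω² + 4λ²)·tanh²(λt+γ). -/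
open Real

theorem tanh_hda (lam γ t : ℝ) :
    HasDerivAt (fun s => Real.tanh (lam * s + γ))
      (lam * (1 - Real.tanh (lam * t + γ) ^ 2)) t := by
  have h : HasDerivAt (fun s => lam * s + γ) lam t := by
    simpa using ((hasDerivAt_id t).const_mul lam).add_const γ
  have hne : Real.cosh (lam * t + γ) ≠ 0 := (Real.cosh_pos _).ne'
  have hdiv := h.sinh.div h.cosh hne
  have heq : (fun s => Real.sinh (lam * s + γ) / Real.cosh (lam * s + γ))
      = fun s => Real.tanh (lam * s + γ) := by
    funext s; rw [Real.tanh_eq_sinh_div_cosh]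
  rw [show ((fun x => Real.sinh (lam * x + γ)) / fun x => Real.cosh (lam * x + γ)) = fun s => Real.tanh (lam * s + γ) from heq] at hdiv
  refine hdiv.congr_deriv (Eq.symm ?_)
  rw [Real.tanh_eq_sinh_div_cosh]
  have hid := Real.cosh_sq_sub_sinh_sq (lam * t + γ)
  field_simp

set_option maxHeartbeats 2000000 in
theorem stmt_13 (om lam γ : ℝ)
    (y₁ y₂ : ℝ → ℝ)
    (hy₁ : ∀ t, y₁ t = om * Real.tanh (lam * t + γ) * Real.cos (om * t) -
      lam * (1 + Real.tanh (lam * t + γ) ^ 2) * Real.sin (om * t))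
    (hy₂ : ∀ t, y₂ t = om * Real.tanh (lam * t + γ) * Real.sin (om * t) +
      lam * (1 + Real.tanh (lam * t + γ) ^ 2) * Real.cos (om * t)) :
    (∀ t : ℝ, Real.sinh (2 * lam * t + 2 * γ) ≠ 0 →
      deriv (deriv y₁) t - (4 * lam / Real.sinh (2 * lam * t + 2 * γ)) * deriv y₁ t +
        (om ^ 2 + 2 * lam ^ 2 / Real.cosh (lam * t + γ) ^ 2) * y₁ t = 0) ∧
    (∀ t : ℝ, Real.sinh (2 * lam * t + 2 * γ) ≠ 0 →
      deriv (deriv y₂) t - (4 * lam / Real.sinh (2 * lam * t + 2 * γ)) * deriv y₂ t +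
        (om ^ 2 + 2 * lam ^ 2 / Real.cosh (lam * t + γ) ^ 2) * y₂ t = 0) ∧
    (∀ t : ℝ, y₁ t * deriv y₂ t - deriv y₁ t * y₂ t =
      om * (om ^ 2 + 4 * lam ^ 2) * Real.tanh (lam * t + γ) ^ 2) := by
  have hy1' : y₁ = fun t => om * Real.tanh (lam * t + γ) * Real.cos (om * t) -
      lam * (1 + Real.tanh (lam * t + γ) ^ 2) * Real.sin (om * t) := funext hy₁
  have hy2' : y₂ = fun t => om * Real.tanh (lam * t + γ) * Real.sin (om * t) +
      lam * (1 + Real.tanh (lam * t + γ) ^ 2) * Real.cos (om * t) := funext hy₂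
  have hsin : ∀ t : ℝ, HasDerivAt (fun s => Real.sin (om * s)) (Real.cos (om * t) * om) t := by
    intro t
    exact HasDerivAt.sin (by simpa using (hasDerivAt_id t).const_mul om)
  have hcos : ∀ t : ℝ, HasDerivAt (fun s => Real.cos (om * s)) (-Real.sin (om * t) * om) t := by
    intro t
    exact HasDerivAt.cos (by simpa using (hasDerivAt_id t).const_mul om)
  have hT : ∀ t : ℝ, HasDerivAt (fun s => Real.tanh (lam * s + γ))
      (lam * (1 - Real.tanh (lam * t + γ) ^ 2)) t := tanh_hda lam γ
  -- first derivatives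
  have hd1 : ∀ t : ℝ, HasDerivAt y₁
      (om * lam * ((1 - Real.tanh (lam * t + γ) ^ 2) * Real.cos (om * t))
        - om ^ 2 * (Real.tanh (lam * t + γ) * Real.sin (om * t))
        - 2 * lam ^ 2 * (Real.tanh (lam * t + γ) * (1 - Real.tanh (lam * t + γ) ^ 2) * Real.sin (om * t))
        - lam * om * ((1 + Real.tanh (lam * t + γ) ^ 2) * Real.cos (om * t))) t := by
    intro t
    rw [hy1']
    have h := (((hT t).const_mul om).mul (hcos t)).sub
      (((((hT t).pow 2).const_add 1).const_mul lam).mul (hsin t))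
    refine h.congr_deriv (Eq.symm ?_)
    simp only [Pi.pow_apply]
    push_cast
    ring
  have hd2 : ∀ t : ℝ, HasDerivAt y₂
      (om * lam * ((1 - Real.tanh (lam * t + γ) ^ 2) * Real.sin (om * t))
        + om ^ 2 * (Real.tanh (lam * t + γ) * Real.cos (om * t))
        + 2 * lam ^ 2 * (Real.tanh (lam * t + γ) * (1 - Real.tanh (lam * t + γ) ^ 2) * Real.cos (om * t))
        - lam * om * ((1 + Real.tanh (lam * t + γ) ^ 2) * Real.sin (om * t))) t := by
    intro t
    rw [hy2']
    have h := (((hT t).const_mul om).mul (hsin t)).add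
      (((((hT t).pow 2).const_add 1).const_mul lam).mul (hcos t))
    refine h.congr_deriv (Eq.symm ?_)
    simp only [Pi.pow_apply]
    push_cast
    ring
  have hdy1 : deriv y₁ = fun t =>
      om * lam * ((1 - Real.tanh (lam * t + γ) ^ 2) * Real.cos (om * t))
        - om ^ 2 * (Real.tanh (lam * t + γ) * Real.sin (om * t))
        - 2 * lam ^ 2 * (Real.tanh (lam * t + γ) * (1 - Real.tanh (lam * t + γ) ^ 2) * Real.sin (om * t))
        - lam * om * ((1 + Real.tanh (lam * t + γ) ^ 2) * Real.cos (om * t)) :=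
    funext fun t => (hd1 t).deriv
  have hdy2 : deriv y₂ = fun t =>
      om * lam * ((1 - Real.tanh (lam * t + γ) ^ 2) * Real.sin (om * t))
        + om ^ 2 * (Real.tanh (lam * t + γ) * Real.cos (om * t))
        + 2 * lam ^ 2 * (Real.tanh (lam * t + γ) * (1 - Real.tanh (lam * t + γ) ^ 2) * Real.cos (om * t))
        - lam * om * ((1 + Real.tanh (lam * t + γ) ^ 2) * Real.sin (om * t)) :=
    funext fun t => (hd2 t).deriv
  refine ⟨?_, ?_, ?_⟩
  · intro t hsnz
    have h2 := (((((((hT t).pow 2).const_sub 1).mul (hcos t)).const_mul (om * lam)).sub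
        ((((hT t).mul (hsin t))).const_mul (om ^ 2))).sub
        ((((hT t).mul ((((hT t).pow 2).const_sub 1))).mul (hsin t)).const_mul (2 * lam ^ 2))).sub
        (((((hT t).pow 2).const_add 1).mul (hcos t)).const_mul (lam * om))
    rw [hdy1]; erw [h2.deriv]; rw [hy₁ t]
    have h2u : 2 * lam * t + 2 * γ = 2 * (lam * t + γ) := by ring
    rw [h2u, Real.sinh_two_mul] at hsnz ⊢
    have hc : Real.cosh (lam * t + γ) ≠ 0 := (Real.cosh_pos _).ne'
    have hs : Real.sinh (lam * t + γ) ≠ 0 := by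
      intro h; apply hsnz; rw [h]; ring
    simp only [Real.tanh_eq_sinh_div_cosh, Pi.pow_apply, Pi.mul_apply]
    push_cast
    field_simp
    linear_combination ((-12*om*lam^2*Real.sinh (lam*t+γ)^2*Real.cosh (lam*t+γ)*Real.cos (om*t)) + (-4*om^2*lam*Real.sinh (lam*t+γ)*Real.cosh (lam*t+γ)^2*Real.sin (om*t)) + (-4*lam^3*Real.sinh (lam*t+γ)*Real.cosh (lam*t+γ)^2*Real.sin (om*t)) + (12*lam^3*Real.sinh (lam*t+γ)^3*Real.sin (om*t))) * Real.cosh_sq_sub_sinh_sq (lam*t+γ)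
  · intro t hsnz
    have h2 := (((((((hT t).pow 2).const_sub 1).mul (hsin t)).const_mul (om * lam)).add
        ((((hT t).mul (hcos t))).const_mul (om ^ 2))).add
        ((((hT t).mul ((((hT t).pow 2).const_sub 1))).mul (hcos t)).const_mul (2 * lam ^ 2))).sub
        (((((hT t).pow 2).const_add 1).mul (hsin t)).const_mul (lam * om))
    rw [hdy2]; erw [h2.deriv]; rw [hy₂ t]
    have h2u : 2 * lam * t + 2 * γ = 2 * (lam * t + γ) := by ring
    rw [h2u, Real.sinh_two_mul] at hsnz ⊢
    have hc : Real.cosh (lam * t + γ) ≠ 0 := (Real.cosh_pos _).ne'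
    have hs : Real.sinh (lam * t + γ) ≠ 0 := by
      intro h; apply hsnz; rw [h]; ring
    simp only [Real.tanh_eq_sinh_div_cosh, Pi.pow_apply, Pi.mul_apply]
    push_cast
    field_simp
    linear_combination ((-12*om*lam^2*Real.sinh (lam*t+γ)^2*Real.cosh (lam*t+γ)*Real.sin (om*t)) + (4*om^2*lam*Real.sinh (lam*t+γ)*Real.cosh (lam*t+γ)^2*Real.cos (om*t)) + (4*lam^3*Real.sinh (lam*t+γ)*Real.cosh (lam*t+γ)^2*Real.cos (om*t)) + (-12*lam^3*Real.sinh (lam*t+γ)^3*Real.cos (om*t))) * Real.cosh_sq_sub_sinh_sq (lam*t+γ)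
  · intro t
    rw [hdy1, hdy2, hy₁ t, hy₂ t]
    have hc : Real.cosh (lam * t + γ) ≠ 0 := (Real.cosh_pos _).ne'
    simp only [Real.tanh_eq_sinh_div_cosh]
    field_simp
    linear_combination ((-1*om^3*Real.cosh (lam*t+γ)^3*Real.cos (om*t)^2) + (-4*om*lam^2*Real.cosh (lam*t+γ)^3*Real.cos (om*t)^2) + (-4*om*lam^2*Real.cosh (lam*t+γ)^3*Real.sin (om*t)^2) + (-1*om^3*Real.cosh (lam*t+γ)^3*Real.sin (om*t)^2) + (1*om^3*Real.cosh (lam*t+γ)^3) + (4*om*lam^2*Real.cosh (lam*t+γ)^3)) * Real.cosh_sq_sub_sinh_sq (lam*t+γ) + ((4*om*lam^2*Real.cosh (lam*t+γ)^5) + (-4*om*lam^2*Real.cosh (lam*t+γ)^3) + (1*om^3*Real.cosh (lam*t+γ)^5) + (-1*om^3*Real.cosh (lam*t+γ)^3)) * Real.sin_sq_add_cos_sq (om*t)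
end

section
/- The function Y(t) = (1/ω²)·(1 − 2λ²/((ω² + 4λ²)·cosh²(λt+γ))) satisfies Y'' − (4λ/sinh(2λt+2γ))·Y' + (ω² + 2λ²/cosh²(λt+γ))·Y = 1 at every t with sinh(2λt+2γ) ≠ 0. -/
open Real

theorem stmt_14 (om lam γ : ℝ) (hom : om ≠ 0) (h2 : om ^ 2 + 4 * lam ^ 2 ≠ 0)
    (Y : ℝ → ℝ)
    (hY : ∀ t, Y t = (1 / om ^ 2) *
      (1 - 2 * lam ^ 2 / ((om ^ 2 + 4 * lam ^ 2) * Real.cosh (lam * t + γ) ^ 2))) :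
    ∀ t : ℝ, Real.sinh (2 * lam * t + 2 * γ) ≠ 0 →
      deriv (deriv Y) t - (4 * lam / Real.sinh (2 * lam * t + 2 * γ)) * deriv Y t +
        (om ^ 2 + 2 * lam ^ 2 / Real.cosh (lam * t + γ) ^ 2) * Y t = 1 := by
  have hco : ∀ s : ℝ, Real.cosh (lam * s + γ) ≠ 0 := fun s => (Real.cosh_pos _).ne'
  set C : ℝ := (1 / om ^ 2) * (2 * lam ^ 2 / (om ^ 2 + 4 * lam ^ 2)) with hC
  -- derivative of inner argument
  have hu : ∀ s : ℝ, HasDerivAt (fun t => lam * t + γ) lam s := by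
    intro s
    simpa using ((hasDerivAt_id s).const_mul lam).add_const γ
  have hF : ∀ s : ℝ, HasDerivAt Y
      (C * (2 * lam * Real.sinh (lam * s + γ)) / Real.cosh (lam * s + γ) ^ 3) s := by
    intro s
    have h1 : HasDerivAt (fun t => Real.cosh (lam * t + γ) ^ 2)
        (2 * Real.cosh (lam * s + γ) * (Real.sinh (lam * s + γ) * lam)) s := by
      have := ((Real.hasDerivAt_cosh (lam * s + γ)).comp s (hu s)).pow 2
      simpa [mul_comm, mul_assoc, mul_left_comm, Pi.pow_def, Function.comp_def] using this
    have h2' : HasDerivAt (fun t => C / Real.cosh (lam * t + γ) ^ 2)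
        (-(C * (2 * Real.cosh (lam * s + γ) * (Real.sinh (lam * s + γ) * lam))) /
          (Real.cosh (lam * s + γ) ^ 2) ^ 2) s := by
      simpa using (hasDerivAt_const s C).fun_div h1 (pow_ne_zero 2 (hco s))
    have h3 : HasDerivAt Y
        (0 - -(C * (2 * Real.cosh (lam * s + γ) * (Real.sinh (lam * s + γ) * lam))) /
          (Real.cosh (lam * s + γ) ^ 2) ^ 2) s := by
      have h4 := (hasDerivAt_const s (1 / om ^ 2)).sub h2'
      have heq : Y = fun t => 1 / om ^ 2 - C / Real.cosh (lam * t + γ) ^ 2 := by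
        funext t
        rw [hY t, hC]
        field_simp
      rw [heq]; exact h4
    convert h3 using 1
    field_simp
    ring
  have hderiv : deriv Y = fun s =>
      C * (2 * lam * Real.sinh (lam * s + γ)) / Real.cosh (lam * s + γ) ^ 3 := by
    funext s; exact (hF s).deriv
  intro t ht
  have hG : HasDerivAt (deriv Y)
      (C * (2 * lam * (lam * Real.cosh (lam * t + γ) ^ 2 -
        3 * lam * Real.sinh (lam * t + γ) ^ 2)) / Real.cosh (lam * t + γ) ^ 4) t := by
    rw [hderiv]
    have hnum : HasDerivAt (fun s => C * (2 * lam * Real.sinh (lam * s + γ)))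
        (C * (2 * lam * (Real.cosh (lam * t + γ) * lam))) t := by
      exact (((Real.hasDerivAt_sinh (lam * t + γ)).comp t (hu t)).const_mul (2 * lam)).const_mul C
    have hden : HasDerivAt (fun s => Real.cosh (lam * s + γ) ^ 3)
        (3 * Real.cosh (lam * t + γ) ^ 2 * (Real.sinh (lam * t + γ) * lam)) t := by
      have := ((Real.hasDerivAt_cosh (lam * t + γ)).comp t (hu t)).pow 3
      simpa [mul_comm, mul_assoc, mul_left_comm, Pi.pow_def, Function.comp_def] using this
    have := hnum.fun_div hden (pow_ne_zero 3 (hco t))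
    refine this.congr_deriv ?_
    field_simp
  have h2l : (2 : ℝ) * lam * t + 2 * γ = 2 * (lam * t + γ) := by ring
  have hsinh2 : Real.sinh (2 * lam * t + 2 * γ) =
      2 * Real.sinh (lam * t + γ) * Real.cosh (lam * t + γ) := by
    rw [h2l, Real.sinh_two_mul]
  have hs : Real.sinh (lam * t + γ) ≠ 0 := by
    intro h; apply ht; rw [hsinh2, h]; ring
  rw [hG.deriv, hderiv, hY t, hsinh2, hC, Real.sinh_sq (lam * t + γ)]
  field_simp
  ring
end

section
/- The functions z₁(t) = ω·cos(ωt) − λ·coth(λt+γ)·sin(ωt) and z₂(t) = ω·sin(ωt) + λ·coth(λt+γ)·cos(ωt) both satisfy z'' + (ω² − 2λ²/sinh²(λt+γ))·z = 0 at every t with sinh(λt+γ) ≠ 0, and their Wronskian z₁·z₂' − z₁'·z₂ equals the constant ω·(ω² + λ²). -/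
open Real

noncomputable def cth (lam γ : ℝ) (t : ℝ) : ℝ :=
  Real.cosh (lam * t + γ) / Real.sinh (lam * t + γ)

lemma hasDerivAt_cth {lam γ t : ℝ} (h : Real.sinh (lam * t + γ) ≠ 0) :
    HasDerivAt (cth lam γ) (-lam / Real.sinh (lam * t + γ) ^ 2) t := by
  have hu : HasDerivAt (fun t : ℝ => lam * t + γ) lam t := by
    simpa using ((hasDerivAt_id t).const_mul lam).add_const γ
  have hc : HasDerivAt (fun t => Real.cosh (lam * t + γ)) (Real.sinh (lam * t + γ) * lam) t :=
    (Real.hasDerivAt_cosh _).comp t hu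
  have hs : HasDerivAt (fun t => Real.sinh (lam * t + γ)) (Real.cosh (lam * t + γ) * lam) t :=
    (Real.hasDerivAt_sinh _).comp t hu
  have := hc.div hs h
  refine this.congr_deriv ?_
  have hid : Real.cosh (lam*t+γ)^2 - Real.sinh (lam*t+γ)^2 = 1 := Real.cosh_sq_sub_sinh_sq _
  rw [show Real.sinh (lam*t+γ) * lam * Real.sinh (lam*t+γ) -
      Real.cosh (lam*t+γ) * (Real.cosh (lam*t+γ) * lam) = -lam from by
      linear_combination (-lam) * hid]

noncomputable def D1 (om lam γ : ℝ) (t : ℝ) : ℝ :=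
  -(om^2) * Real.sin (om*t) + lam^2 * Real.sin (om*t) / Real.sinh (lam*t+γ)^2
    - lam * om * cth lam γ t * Real.cos (om*t)

noncomputable def D2 (om lam γ : ℝ) (t : ℝ) : ℝ :=
  om^2 * Real.cos (om*t) - lam^2 * Real.cos (om*t) / Real.sinh (lam*t+γ)^2
    - lam * om * cth lam γ t * Real.sin (om*t)

lemma hom' (om : ℝ) (t : ℝ) : HasDerivAt (fun t : ℝ => om * t) om t := by
  simpa using (hasDerivAt_id t).const_mul om

lemma hcos' (om : ℝ) (t : ℝ) :
    HasDerivAt (fun t => Real.cos (om*t)) (-Real.sin (om*t) * om) t :=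
  (Real.hasDerivAt_cos _).comp t (hom' om t)

lemma hsin' (om : ℝ) (t : ℝ) :
    HasDerivAt (fun t => Real.sin (om*t)) (Real.cos (om*t) * om) t :=
  (Real.hasDerivAt_sin _).comp t (hom' om t)

lemma hasDerivAt_z1 (om lam γ : ℝ) {t : ℝ} (h : Real.sinh (lam * t + γ) ≠ 0) :
    HasDerivAt (fun t => om * Real.cos (om*t) - lam * cth lam γ t * Real.sin (om*t))
      (D1 om lam γ t) t := by
  have h1 := ((hcos' om t).const_mul om).sub
    (((hasDerivAt_cth h).const_mul lam).mul (hsin' om t))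
  refine h1.congr_deriv ?_
  unfold D1 cth
  generalize Real.sinh (lam*t+γ) = S at h ⊢
  field_simp
  ring

lemma hasDerivAt_z2 (om lam γ : ℝ) {t : ℝ} (h : Real.sinh (lam * t + γ) ≠ 0) :
    HasDerivAt (fun t => om * Real.sin (om*t) + lam * cth lam γ t * Real.cos (om*t))
      (D2 om lam γ t) t := by
  have h1 := ((hsin' om t).const_mul om).add
    (((hasDerivAt_cth h).const_mul lam).mul (hcos' om t))
  refine h1.congr_deriv ?_
  unfold D2 cth
  generalize Real.sinh (lam*t+γ) = S at h ⊢
  field_simp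
  ring

lemma hasDerivAt_D1 (om lam γ : ℝ) {t : ℝ} (h : Real.sinh (lam * t + γ) ≠ 0) :
    HasDerivAt (D1 om lam γ)
      (-(om^3) * Real.cos (om*t) + 2*lam^2*om * Real.cos (om*t) / Real.sinh (lam*t+γ)^2
        - 2*lam^3 * cth lam γ t * Real.sin (om*t) / Real.sinh (lam*t+γ)^2
        + lam*om^2 * cth lam γ t * Real.sin (om*t)) t := by
  have hu : HasDerivAt (fun t : ℝ => lam * t + γ) lam t := by
    simpa using ((hasDerivAt_id t).const_mul lam).add_const γ
  have hs : HasDerivAt (fun t => Real.sinh (lam * t + γ)) (Real.cosh (lam * t + γ) * lam) t :=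
    (Real.hasDerivAt_sinh _).comp t hu
  have hS2 := hs.pow 2
  have hdiv := ((hsin' om t).const_mul (lam^2)).div hS2 (pow_ne_zero 2 h)
  have hthird := ((hasDerivAt_cth h).const_mul (lam*om)).mul (hcos' om t)
  have htot := (((hsin' om t).const_mul (-(om^2))).add hdiv).sub hthird
  refine htot.congr_deriv ?_
  unfold cth
  simp only [Pi.pow_apply]
  generalize Real.sinh (lam*t+γ) = S at h ⊢
  field_simp
  ring

lemma hasDerivAt_D2 (om lam γ : ℝ) {t : ℝ} (h : Real.sinh (lam * t + γ) ≠ 0) :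
    HasDerivAt (D2 om lam γ)
      (-(om^3) * Real.sin (om*t) + 2*lam^2*om * Real.sin (om*t) / Real.sinh (lam*t+γ)^2
        + 2*lam^3 * cth lam γ t * Real.cos (om*t) / Real.sinh (lam*t+γ)^2
        - lam*om^2 * cth lam γ t * Real.cos (om*t)) t := by
  have hu : HasDerivAt (fun t : ℝ => lam * t + γ) lam t := by
    simpa using ((hasDerivAt_id t).const_mul lam).add_const γ
  have hs : HasDerivAt (fun t => Real.sinh (lam * t + γ)) (Real.cosh (lam * t + γ) * lam) t :=
    (Real.hasDerivAt_sinh _).comp t hu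
  have hS2 := hs.pow 2
  have hdiv := ((hcos' om t).const_mul (lam^2)).div hS2 (pow_ne_zero 2 h)
  have hthird := ((hasDerivAt_cth h).const_mul (lam*om)).mul (hsin' om t)
  have htot := (((hcos' om t).const_mul (om^2)).sub hdiv).sub hthird
  refine htot.congr_deriv ?_
  unfold cth
  simp only [Pi.pow_apply]
  generalize Real.sinh (lam*t+γ) = S at h ⊢
  field_simp
  ring

theorem stmt_15 (om lam γ : ℝ)
    (z₁ z₂ : ℝ → ℝ)
    (hz₁ : ∀ t, z₁ t = om * Real.cos (om * t) -
      lam * (Real.cosh (lam * t + γ) / Real.sinh (lam * t + γ)) * Real.sin (om * t))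
    (hz₂ : ∀ t, z₂ t = om * Real.sin (om * t) +
      lam * (Real.cosh (lam * t + γ) / Real.sinh (lam * t + γ)) * Real.cos (om * t)) :
    (∀ t : ℝ, Real.sinh (lam * t + γ) ≠ 0 →
      deriv (deriv z₁) t + (om ^ 2 - 2 * lam ^ 2 / Real.sinh (lam * t + γ) ^ 2) * z₁ t = 0) ∧
    (∀ t : ℝ, Real.sinh (lam * t + γ) ≠ 0 →
      deriv (deriv z₂) t + (om ^ 2 - 2 * lam ^ 2 / Real.sinh (lam * t + γ) ^ 2) * z₂ t = 0) ∧
    (∀ t : ℝ, Real.sinh (lam * t + γ) ≠ 0 →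
      z₁ t * deriv z₂ t - deriv z₁ t * z₂ t = om * (om ^ 2 + lam ^ 2)) := by
  have ez₁ : z₁ = fun t => om * Real.cos (om*t) - lam * cth lam γ t * Real.sin (om*t) :=
    funext fun t => by rw [hz₁ t]; rfl
  have ez₂ : z₂ = fun t => om * Real.sin (om*t) + lam * cth lam γ t * Real.cos (om*t) :=
    funext fun t => by rw [hz₂ t]; rfl
  have hU : IsOpen {s : ℝ | Real.sinh (lam * s + γ) ≠ 0} := by
    have hc : Continuous fun s : ℝ => Real.sinh (lam * s + γ) := by continuity
    exact isOpen_ne.preimage hc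
  have hd₁ : ∀ t, Real.sinh (lam * t + γ) ≠ 0 → deriv z₁ t = D1 om lam γ t := fun t ht => by
    rw [ez₁]; exact (hasDerivAt_z1 om lam γ ht).deriv
  have hd₂ : ∀ t, Real.sinh (lam * t + γ) ≠ 0 → deriv z₂ t = D2 om lam γ t := fun t ht => by
    rw [ez₂]; exact (hasDerivAt_z2 om lam γ ht).deriv
  have hdd₁ : ∀ t, Real.sinh (lam * t + γ) ≠ 0 →
      deriv (deriv z₁) t = deriv (D1 om lam γ) t := fun t ht => by
    apply Filter.EventuallyEq.deriv_eq
    filter_upwards [hU.mem_nhds ht] with s hs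
    exact hd₁ s hs
  have hdd₂ : ∀ t, Real.sinh (lam * t + γ) ≠ 0 →
      deriv (deriv z₂) t = deriv (D2 om lam γ) t := fun t ht => by
    apply Filter.EventuallyEq.deriv_eq
    filter_upwards [hU.mem_nhds ht] with s hs
    exact hd₂ s hs
  refine ⟨fun t ht => ?_, fun t ht => ?_, fun t ht => ?_⟩
  · rw [hdd₁ t ht, (hasDerivAt_D1 om lam γ ht).deriv, hz₁ t]
    unfold cth
    field_simp
    ring
  · rw [hdd₂ t ht, (hasDerivAt_D2 om lam γ ht).deriv, hz₂ t]
    unfold cth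
    field_simp
    ring
  · rw [hd₁ t ht, hd₂ t ht, hz₁ t, hz₂ t]
    unfold D1 D2 cth
    have hid : Real.cosh (lam*t+γ)^2 - Real.sinh (lam*t+γ)^2 = 1 := Real.cosh_sq_sub_sinh_sq _
    have hpy : Real.sin (om*t)^2 + Real.cos (om*t)^2 = 1 := Real.sin_sq_add_cos_sq _
    set S := Real.sinh (lam*t+γ) with hS
    set C := Real.cosh (lam*t+γ) with hC
    field_simp
    linear_combination (om*S^3*(om^2+lam^2)) * hpy +
      (om*lam^2*S*(Real.sin (om*t)^2 + Real.cos (om*t)^2)) * hid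
end
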